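/- Define the trader's gain from a swap of x as G(x) = p1·x·SX(x, r0, r1) − p0·x, where SX(x, r0, r1) = φ·r1/(r0 + φ·x). Let x0 > 0 be the equilibrium swap value. If φ < 1, then for all x with 0 < x < x0, G(x0) > G(x). -/

import Mathlib

theorem stmt14 (φ r0 r1 p0 p1 x0 : ℝ) (hφ0 : 0 < φ) (hφ1 : φ < 1)
    (hr0 : 0 < r0) (hr1 : 0 < r1) (hp0 : 0 < p0) (hp1 : 0 < p1)
    (hx0 : x0 = (-(Real.sqrt p0) * r0 * (1 + φ) +
      Real.sqrt r0 * Real.sqrt (p0 * r0 * (1 - φ)^2 + 4 * p1 * r1 * φ^2)) /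
      (2 * Real.sqrt p0 * φ))
    (hpos : 0 < x0) :
    ∀ x : ℝ, 0 < x → x < x0 →
      p1 * x0 * (φ * r1 / (r0 + φ * x0)) - p0 * x0 >
      p1 * x * (φ * r1 / (r0 + φ * x)) - p0 * x := by
  have hsp : Real.sqrt p0 > 0 := Real.sqrt_pos.mpr hp0
  have hs : Real.sqrt p0 ^ 2 = p0 := Real.sq_sqrt hp0.le
  have ht : Real.sqrt r0 ^ 2 = r0 := Real.sq_sqrt hr0.le
  have harg : (0:ℝ) ≤ p0 * r0 * (1 - φ)^2 + 4 * p1 * r1 * φ^2 := by positivity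
  have hS : Real.sqrt (p0 * r0 * (1 - φ)^2 + 4 * p1 * r1 * φ^2) ^ 2
      = p0 * r0 * (1 - φ)^2 + 4 * p1 * r1 * φ^2 := Real.sq_sqrt harg
  have h1 : 2 * Real.sqrt p0 * φ * x0 + Real.sqrt p0 * r0 * (1 + φ)
      = Real.sqrt r0 * Real.sqrt (p0 * r0 * (1 - φ)^2 + 4 * p1 * r1 * φ^2) := by
    rw [hx0]; field_simp; ring
  have h2 : (2 * Real.sqrt p0 * φ * x0 + Real.sqrt p0 * r0 * (1 + φ))^2
      = (Real.sqrt r0 * Real.sqrt (p0 * r0 * (1 - φ)^2 + 4 * p1 * r1 * φ^2))^2 := by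
    rw [h1]
  have E : p0 * ((r0 + φ * x0) * (r0 + x0)) = p1 * φ * r1 * r0 := by
    have h2a := h2
    rw [mul_pow, ht, hS] at h2a
    have h2' : p0 * (2 * φ * x0 + r0 * (1 + φ))^2
        = r0 * (p0 * r0 * (1 - φ)^2 + 4 * p1 * r1 * φ^2) := by
      linear_combination h2a - ((2 * φ * x0 + r0 * (1 + φ))^2) * hs
    have E4 : (4 * φ) * (p0 * ((r0 + φ * x0) * (r0 + x0)))
        = (4 * φ) * (p1 * φ * r1 * r0) := by linear_combination h2'
    exact mul_left_cancel₀ (by positivity : (4 * φ : ℝ) ≠ 0) E4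
  intro x hx hxlt
  have hD0 : 0 < r0 + φ * x0 := by positivity
  have hDx : 0 < r0 + φ * x := by positivity
  have hkey : p0 * ((r0 + φ * x0) * (r0 + φ * x)) < p1 * φ * r1 * r0 := by
    have h3 : r0 + φ * x < r0 + x0 := by nlinarith
    nlinarith [mul_pos hp0 hD0]
  rw [gt_iff_lt, ← sub_pos]
  have expand : p1 * x0 * (φ * r1 / (r0 + φ * x0)) - p0 * x0 -
      (p1 * x * (φ * r1 / (r0 + φ * x)) - p0 * x)
      = (x0 - x) * (p1 * φ * r1 * r0 - p0 * ((r0 + φ * x0) * (r0 + φ * x)))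
        / ((r0 + φ * x0) * (r0 + φ * x)) := by
    field_simp
    ring
  rw [expand]
  apply div_pos
  · have := sub_pos.mpr hxlt
    nlinarith [sub_pos.mpr hkey]
  · positivity
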